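/- Let v_1,...,v_q be vectors in N^d lying in a hyperplane of R^d not containing the origin, let r_0 be the rank of the matrix with columns v_1,...,v_q, and let I be the monomial ideal of k[x_1,...,x_d] generated by x^{v_1},...,x^{v_q}. Then for every integer b ≥ r_0, the integral closure of I^b satisfies \overline{I^b} = I · \overline{I^{b-1}}. -/

import Mathlib

open MvPolynomial Module Matrix

/-- The integral closure of the `n`-th power of a monomial ideal `I`,
described as the monomial ideal generated by the monomials `x^a` such that
`x^(m•a) ∈ I^(n*m)` for some positive integer `m`. -/
noncomputable def intCl {k : Type*} [Field k] {σ : Type*}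
    (I : Ideal (MvPolynomial σ k)) (n : ℕ) : Ideal (MvPolynomial σ k) :=
  Ideal.span {p | ∃ a : σ →₀ ℕ, p = monomial a (1 : k) ∧
    ∃ m : ℕ, 0 < m ∧ monomial (m • a) (1 : k) ∈ I ^ (n * m)}


lemma prod_mem_pow_sum {R : Type*} [CommRing R] (I : Ideal R) {ι : Type*} (s : Finset ι)
    (f : ι → R) (c : ι → ℕ) (h : ∀ j ∈ s, f j ∈ I ^ c j) :
    ∏ j ∈ s, f j ∈ I ^ (∑ j ∈ s, c j) := by
  classical
  induction s using Finset.induction_on with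
  | empty => simp [Ideal.one_eq_top]
  | insert _ _ hj ih =>
    rename_i j s'
    rw [Finset.prod_insert hj, Finset.sum_insert hj, pow_add]
    exact Ideal.mul_mem_mul (h _ (Finset.mem_insert_self _ _))
      (ih fun x hx => h x (Finset.mem_insert_of_mem hx))

lemma prod_monomial_one {k : Type*} [CommSemiring k] {σ : Type*} {ι : Type*} (s : Finset ι)
    (g : ι → (σ →₀ ℕ)) :
    ∏ j ∈ s, monomial (g j) (1 : k) = monomial (∑ j ∈ s, g j) 1 := by
  classical
  induction s using Finset.induction_on with
  | empty => simp
  | insert _ _ hj ih =>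
    rename_i j s'
    rw [Finset.prod_insert hj, Finset.sum_insert hj, ih, monomial_mul, one_mul]

lemma sum_single_smul {d q : ℕ} (v : Fin q → (Fin d →₀ ℕ)) (i : Fin q) :
    ∑ j, (Pi.single i 1 : Fin q → ℕ) j • v j = v i := by
  classical
  rw [Finset.sum_eq_single i]
  · simp
  · intro j _ hji
    rw [Pi.single_eq_of_ne hji, zero_smul]
  · simp

lemma pow_span_eq {k : Type*} [Field k] {d q : ℕ} (v : Fin q → (Fin d →₀ ℕ)) (n : ℕ) :
    (Ideal.span (Set.range fun i => monomial (v i) (1 : k))) ^ n =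
      Ideal.span ((fun s => monomial s (1 : k)) ''
        {s | ∃ c : Fin q → ℕ, ∑ j, c j = n ∧ s = ∑ j, c j • v j}) := by
  classical
  induction n with
  | zero =>
    rw [pow_zero]
    have h0 : {s : Fin d →₀ ℕ | ∃ c : Fin q → ℕ, ∑ j, c j = 0 ∧ s = ∑ j, c j • v j} = {0} := by
      ext s
      constructor
      · rintro ⟨c, hc, rfl⟩
        rw [Finset.sum_eq_zero_iff] at hc
        simp only [Set.mem_singleton_iff]
        rw [Finset.sum_eq_zero]
        intro j hj
        rw [hc j hj, zero_smul]
      · rintro rfl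
        exact ⟨0, by simp, by simp⟩
    rw [h0, Set.image_singleton, Ideal.one_eq_top, eq_comm, Ideal.span_singleton_eq_top]
    simp only [monomial_zero', C_1]
    exact isUnit_one
  | succ n ih =>
    rw [pow_succ, ih, Ideal.span_mul_span']
    congr 1
    ext p
    simp only [Set.mem_mul, Set.mem_image, Set.mem_setOf_eq, Set.mem_range]
    constructor
    · rintro ⟨x, ⟨s, ⟨c, hc, rfl⟩, rfl⟩, y, ⟨i, rfl⟩, rfl⟩
      refine ⟨(∑ j, c j • v j) + v i, ⟨c + Pi.single i 1, ?_, ?_⟩, ?_⟩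
      · simp [Finset.sum_add_distrib, hc, Finset.sum_pi_single']
      · simp [add_smul, Finset.sum_add_distrib, sum_single_smul]
      · rw [monomial_mul, one_mul]
    · rintro ⟨s, ⟨c, hc, rfl⟩, rfl⟩
      obtain ⟨i, hi⟩ : ∃ i, c i ≠ 0 := by
        by_contra h
        push_neg at h
        simp [h] at hc
      set c' : Fin q → ℕ := fun j => if j = i then c i - 1 else c j with hc'
      have hcc : c = c' + Pi.single i 1 := by
        funext j
        by_cases hji : j = i
        · subst hji
          simp [c', Nat.sub_add_cancel (Nat.one_le_iff_ne_zero.mpr hi)]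
        · simp [c', hji, Pi.single_eq_of_ne hji]
      have hsum : ∑ j, c' j = n := by
        have h2 := hc
        rw [hcc] at h2
        simp only [Pi.add_apply, Finset.sum_add_distrib, Finset.sum_pi_single'] at h2
        simp only [Finset.mem_univ, if_true] at h2
        omega
      refine ⟨monomial (∑ j, c' j • v j) 1, ⟨_, ⟨c', hsum, rfl⟩, rfl⟩,
        monomial (v i) 1, ⟨i, rfl⟩, ?_⟩
      rw [monomial_mul, one_mul, hcc]
      congr 1
      simp [add_smul, Finset.sum_add_distrib, sum_single_smul]

lemma monomial_mem_pow_iff {k : Type*} [Field k] {d q : ℕ} (v : Fin q → (Fin d →₀ ℕ)) (n : ℕ)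
    (a : Fin d →₀ ℕ) :
    monomial a (1 : k) ∈ (Ideal.span (Set.range fun i => monomial (v i) (1 : k))) ^ n ↔
      ∃ c : Fin q → ℕ, n ≤ ∑ j, c j ∧ ∑ j, c j • v j ≤ a := by
  constructor
  · intro h
    rw [pow_span_eq] at h
    rw [mem_ideal_span_monomial_image] at h
    obtain ⟨si, ⟨c, hc, rfl⟩, hle⟩ := h a (by simp)
    exact ⟨c, hc.ge, hle⟩
  · rintro ⟨c, hc, hle⟩
    have h1 : monomial (∑ j, c j • v j) (1 : k) ∈
        (Ideal.span (Set.range fun i => monomial (v i) (1 : k))) ^ (∑ j, c j) := by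
      rw [← prod_monomial_one]
      refine prod_mem_pow_sum _ _ _ _ fun j _ => ?_
      have hp : ((monomial (v j) (1 : k)) ^ (c j)) = monomial (c j • v j) 1 := by
        rw [monomial_pow, one_pow]
      rw [← hp]
      exact Ideal.pow_mem_pow (Ideal.subset_span (Set.mem_range_self j)) _
    have h2 : monomial a (1 : k) =
        monomial (∑ j, c j • v j) 1 * monomial (a - ∑ j, c j • v j) 1 := by
      rw [monomial_mul, one_mul, add_tsub_cancel_of_le hle]
    rw [h2]
    exact Ideal.mul_mem_right _ _ (Ideal.pow_le_pow_right hc h1)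


lemma rat_mul_den_nat {r : ℚ} (hr : 0 ≤ r) {D : ℕ} (hd : r.den ∣ D) :
    ∃ m : ℕ, (m : ℚ) = r * D := by
  obtain ⟨e, rfl⟩ := hd
  refine ⟨r.num.toNat * e, ?_⟩
  have h1 : ((r.num.toNat : ℕ) : ℚ) = (r.num : ℚ) := by
    exact_mod_cast congrArg (fun z : ℤ => (z : ℚ)) (Int.toNat_of_nonneg (Rat.num_nonneg.mpr hr))
  have hden : (r.den : ℚ) ≠ 0 := by exact_mod_cast r.den_nz
  have h2 : (r.num : ℚ) = r * (r.den : ℚ) := (div_eq_iff hden).mp (Rat.num_div_den r)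
  push_cast
  rw [h1, h2]
  ring

lemma li_rat_real {ι : Type*} [Fintype ι] {n : ℕ} {z : ι → (Fin n → ℚ)}
    (h : LinearIndependent ℚ z) :
    LinearIndependent ℝ (fun i => fun x => ((z i x : ℚ) : ℝ)) := by
  classical
  set T : (ι → ℚ) →ₗ[ℚ] (Fin n → ℚ) := Fintype.linearCombination ℚ z with hT
  have hker : LinearMap.ker T = ⊥ := by
    rw [LinearMap.ker_eq_bot']
    intro g hg
    funext i
    exact Fintype.linearIndependent_iff.mp h g hg i
  obtain ⟨φ, hφ⟩ := T.exists_leftInverse_of_injective hker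
  have hφz : ∀ i : ι, φ (z i) = Pi.single i 1 := by
    intro i
    have h1 : T (Pi.single i 1) = z i := by
      rw [hT, Fintype.linearCombination_apply_single, one_smul]
    have h2 := LinearMap.congr_fun hφ (Pi.single i (1 : ℚ))
    rw [LinearMap.comp_apply, h1] at h2
    simpa using h2
  have key : ∀ i i' : ι, ∑ x, φ (Pi.single x 1) i' * z i x = (Pi.single i 1 : ι → ℚ) i' := by
    intro i i'
    have hsingle : ∀ x : Fin n, (fun j => if x = j then (1 : ℚ) else 0) = Pi.single x 1 := by
      intro x
      funext j
      simp [Pi.single_apply, eq_comm]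
    have h3 : φ (z i) = ∑ x, z i x • φ (Pi.single x 1) := by
      conv_lhs => rw [pi_eq_sum_univ (z i)]
      rw [_root_.map_sum]
      simp_rw [LinearMap.map_smul, hsingle]
    have h4 := congrFun h3 i'
    rw [hφz i] at h4
    rw [h4, Finset.sum_apply]
    refine Finset.sum_congr rfl fun x _ => ?_
    rw [Pi.smul_apply, smul_eq_mul, mul_comm]
  rw [Fintype.linearIndependent_iff]
  intro g hg i'
  have h0 : ∀ x : Fin n, ∑ i, g i * ((z i x : ℚ) : ℝ) = 0 := by
    intro x
    have h5 := congrFun hg x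
    simpa [Finset.sum_apply] using h5
  have h2 : ∑ i, g i * ((∑ x, φ (Pi.single x 1) i' * z i x : ℚ) : ℝ) = 0 := by
    calc ∑ i, g i * ((∑ x, φ (Pi.single x 1) i' * z i x : ℚ) : ℝ)
        = ∑ i, ∑ x, ((φ (Pi.single x 1) i' : ℚ) : ℝ) * (g i * ((z i x : ℚ) : ℝ)) := by
          refine Finset.sum_congr rfl fun i _ => ?_
          push_cast
          rw [Finset.mul_sum]
          exact Finset.sum_congr rfl fun x _ => by ring
      _ = ∑ x, ((φ (Pi.single x 1) i' : ℚ) : ℝ) * (∑ i, g i * ((z i x : ℚ) : ℝ)) := by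
          rw [Finset.sum_comm]
          simp_rw [Finset.mul_sum]
      _ = 0 := Finset.sum_eq_zero fun x _ => by rw [h0 x, mul_zero]
  have h3 : ∑ i, g i * (((Pi.single i 1 : ι → ℚ) i' : ℚ) : ℝ) = 0 := by
    rw [← h2]
    exact Finset.sum_congr rfl fun i _ => by rw [key i i']
  simpa [Pi.single_apply, apply_ite (fun r : ℚ => (r : ℝ)), mul_ite, Finset.sum_ite_eq] using h3

lemma key_lemma {d q b : ℕ} (hb : 1 ≤ b) (v : Fin q → (Fin d →₀ ℕ)) (w : Fin d → ℝ)
    (hw : ∀ i, ∑ j, (v i j : ℝ) * w j = 1)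
    (hrank : (Matrix.of fun (i : Fin d) (j : Fin q) => (v j i : ℝ)).rank ≤ b)
    (a : Fin d →₀ ℕ) (m : ℕ) (hm : 0 < m) (c : Fin q → ℕ)
    (hcs : b * m ≤ ∑ j, c j)
    (hle : ∀ i, ∑ j, c j * v j i ≤ m * a i) :
    ∃ j₀ : Fin q, (∀ i, v j₀ i ≤ a i) ∧ ∃ m' : ℕ, 0 < m' ∧ ∃ c' : Fin q → ℕ,
      (b - 1) * m' ≤ ∑ j, c' j ∧ ∀ i, (∑ j, c' j * v j i) + m' * v j₀ i ≤ m' * a i := by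
  classical
  set u : Fin q → (Fin d → ℚ) := fun j i => (v j i : ℚ) with hu
  set L : ℕ := ∑ j, c j with hL
  have hL0 : 0 < L := lt_of_lt_of_le (Nat.mul_pos hb hm) hcs
  have hLQ : ((L : ℚ)) ≠ 0 := by exact_mod_cast hL0.ne'
  set x : Fin d → ℚ := ∑ j, ((c j : ℚ) / L) • u j with hx
  have hxmem : x ∈ convexHull ℚ (Set.range u) := by
    refine mem_convexHull_of_exists_fintype (fun j => (c j : ℚ) / L) u
      (fun j => by positivity) ?_ (fun j => Set.mem_range_self j) rfl
    rw [← Finset.sum_div]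
    rw [show (∑ j, (c j : ℚ)) = ((L : ℕ) : ℚ) by rw [hL]; push_cast; rfl]
    exact div_self hLQ
  obtain ⟨ι, hι, z, μ, hzr, haff, hμpos, hμsum, hμx⟩ :=
    eq_pos_convex_span_of_mem_convexHull hxmem
  letI := hι
  haveI hιne : Nonempty ι := by
    rcases isEmpty_or_nonempty ι with he | h
    · exfalso
      rw [Finset.univ_eq_empty, Finset.sum_empty] at hμsum
      exact zero_ne_one hμsum
    · exact h
  choose jsel hjsel using fun i : ι => hzr (Set.mem_range_self i)
  have hzw : ∀ i : ι, ∑ xi, ((z i xi : ℚ) : ℝ) * w xi = 1 := by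
    intro i
    rw [← hjsel i]
    have := hw (jsel i)
    simp only [hu]
    push_cast
    exact this
  -- ℚ-linear independence of z
  have hli : LinearIndependent ℚ z := by
    rw [linearIndependent_iff']
    intro s g hg
    have hinner : ∀ xi : Fin d, (∑ i ∈ s, (g i : ℝ) * ((z i xi : ℚ) : ℝ)) = 0 := by
      intro xi
      have h5 := congrFun hg xi
      rw [Finset.sum_apply] at h5
      simp only [Pi.smul_apply, smul_eq_mul, Pi.zero_apply] at h5
      have h6 : ((∑ i ∈ s, g i * z i xi : ℚ) : ℝ) = 0 := by rw [h5]; norm_num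
      push_cast at h6
      exact h6
    have hgs : ∑ i ∈ s, g i = 0 := by
      have hr : ∑ i ∈ s, ((g i : ℚ) : ℝ) = 0 := by
        calc ∑ i ∈ s, ((g i : ℚ) : ℝ)
            = ∑ i ∈ s, (g i : ℝ) * (∑ xi, ((z i xi : ℚ) : ℝ) * w xi) := by
              refine Finset.sum_congr rfl fun i _ => by rw [hzw i, mul_one]
          _ = ∑ i ∈ s, ∑ xi, (g i : ℝ) * ((z i xi : ℚ) : ℝ) * w xi := by
              refine Finset.sum_congr rfl fun i _ => ?_
              rw [Finset.mul_sum]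
              exact Finset.sum_congr rfl fun xi _ => by ring
          _ = ∑ xi, ∑ i ∈ s, (g i : ℝ) * ((z i xi : ℚ) : ℝ) * w xi := Finset.sum_comm
          _ = ∑ xi, (∑ i ∈ s, (g i : ℝ) * ((z i xi : ℚ) : ℝ)) * w xi := by
              refine Finset.sum_congr rfl fun xi _ => by rw [Finset.sum_mul]
          _ = 0 := Finset.sum_eq_zero fun xi _ => by rw [hinner xi, zero_mul]
      exact_mod_cast hr
    exact affineIndependent_iff.mp haff s g hgs hg
  -- cardinality bound
  have hcard : Fintype.card ι ≤ b := by
    set M : Matrix (Fin d) (Fin q) ℝ := Matrix.of fun i j => (v j i : ℝ) with hM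
    have h1 : LinearIndependent ℝ (fun i => fun xi => ((z i xi : ℚ) : ℝ)) := li_rat_real hli
    have h2 : Set.range (fun i => fun xi => ((z i xi : ℚ) : ℝ)) ⊆ Set.range Mᵀ := by
      rintro _ ⟨i, rfl⟩
      refine ⟨jsel i, ?_⟩
      funext xi
      have h7 := congrFun (hjsel i).symm xi
      show Mᵀ (jsel i) xi = ((z i xi : ℚ) : ℝ)
      rw [h7]
      simp [hM, hu, Matrix.transpose_apply]
    haveI : FiniteDimensional ℝ (Submodule.span ℝ (Set.range Mᵀ)) :=
      FiniteDimensional.span_of_finite ℝ (Set.finite_range _)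
    have h4 := finrank_span_eq_card h1
    have h5 : finrank ℝ (Submodule.span ℝ (Set.range (fun i => fun xi => ((z i xi : ℚ) : ℝ)))) ≤
        finrank ℝ (Submodule.span ℝ (Set.range Mᵀ)) :=
      Submodule.finrank_mono (Submodule.span_mono h2)
    rw [h4] at h5
    calc Fintype.card ι ≤ finrank ℝ (Submodule.span ℝ (Set.range Mᵀ)) := h5
      _ = M.rank := M.rank_eq_finrank_span_cols.symm
      _ ≤ b := hrank
  have hcard0 : 0 < Fintype.card ι := Fintype.card_pos
  -- pigeonhole
  obtain ⟨i₀, hi₀⟩ : ∃ i₀ : ι, (1 : ℚ) / (Fintype.card ι) ≤ μ i₀ := by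
    by_contra hcon
    push_neg at hcon
    have hlt := Finset.sum_lt_sum_of_nonempty Finset.univ_nonempty
      (fun i _ => hcon i)
    rw [hμsum, Finset.sum_const, Finset.card_univ, nsmul_eq_mul] at hlt
    rw [mul_one_div, div_self (by exact_mod_cast hcard0.ne' : (Fintype.card ι : ℚ) ≠ 0)] at hlt
    exact lt_irrefl _ hlt
  set j₀ : Fin q := jsel i₀ with hj₀
  -- the lambda weights
  set lam : Fin q → ℚ := fun j => ∑ i : ι, if jsel i = j then (L : ℚ) * μ i else 0 with hlam
  have hlam0 : ∀ j, 0 ≤ lam j := by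
    intro j
    refine Finset.sum_nonneg fun i _ => ?_
    split
    · exact mul_nonneg (Nat.cast_nonneg L) (hμpos _).le
    · exact le_refl _
  have hu0 : ∀ j xi, (0:ℚ) ≤ u j xi := fun j xi => Nat.cast_nonneg _
  have hlamsum : ∑ j, lam j = (L : ℚ) := by
    calc ∑ j, lam j = ∑ i : ι, ∑ j, (if jsel i = j then (L:ℚ) * μ i else 0) := Finset.sum_comm
      _ = ∑ i : ι, (L:ℚ) * μ i := by
          refine Finset.sum_congr rfl fun i _ => ?_
          rw [Finset.sum_ite_eq]
          simp
      _ = (L:ℚ) := by rw [← Finset.mul_sum, hμsum, mul_one]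
  have hsum_eq : ∀ xi, ∑ j, lam j * u j xi = ∑ j, (c j : ℚ) * u j xi := by
    intro xi
    have h8 : ∑ j, lam j * u j xi = ∑ i : ι, (L:ℚ) * (μ i * z i xi) := by
      calc ∑ j, lam j * u j xi
          = ∑ j, ∑ i : ι, (if jsel i = j then (L:ℚ) * μ i else 0) * u j xi := by
            refine Finset.sum_congr rfl fun j _ => by rw [hlam, Finset.sum_mul]
        _ = ∑ i : ι, ∑ j, (if jsel i = j then (L:ℚ) * μ i else 0) * u j xi := Finset.sum_comm
        _ = ∑ i : ι, (L:ℚ) * μ i * u (jsel i) xi := by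
            refine Finset.sum_congr rfl fun i _ => ?_
            simp_rw [ite_mul, zero_mul]
            rw [Finset.sum_ite_eq]
            simp
        _ = ∑ i : ι, (L:ℚ) * (μ i * z i xi) := by
            refine Finset.sum_congr rfl fun i _ => ?_
            rw [congrFun (hjsel i) xi]
            ring
    have h9 : ∑ i : ι, μ i * z i xi = x xi := by
      have h9' := congrFun hμx xi
      rw [Finset.sum_apply] at h9'
      simpa [Pi.smul_apply, smul_eq_mul] using h9'
    rw [h8, ← Finset.mul_sum, h9, hx, Finset.sum_apply, Finset.mul_sum]
    refine Finset.sum_congr rfl fun j _ => ?_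
    rw [Pi.smul_apply, smul_eq_mul]
    field_simp
  have hlamj0 : (m : ℚ) ≤ lam j₀ := by
    have h10 : (L:ℚ) * μ i₀ ≤ lam j₀ := by
      have h11 := Finset.single_le_sum (f := fun i : ι => if jsel i = j₀ then (L:ℚ)*μ i else 0)
        (fun i _ => by
          split
          · exact mul_nonneg (Nat.cast_nonneg L) (hμpos _).le
          · exact le_refl _)
        (Finset.mem_univ i₀)
      rw [if_pos hj₀.symm] at h11
      exact h11
    have hcQ : (Fintype.card ι : ℚ) ≤ b := by exact_mod_cast hcard
    have hbQ : (0:ℚ) < b := by exact_mod_cast hb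
    have hcQ0 : (0:ℚ) < Fintype.card ι := by exact_mod_cast hcard0
    have h13 : (1:ℚ)/b ≤ 1/(Fintype.card ι) := one_div_le_one_div_of_le hcQ0 hcQ
    have h14 : (1:ℚ)/b ≤ μ i₀ := h13.trans hi₀
    have h15 : (L:ℚ) * ((1:ℚ)/b) ≤ (L:ℚ) * μ i₀ := mul_le_mul_of_nonneg_left h14 (Nat.cast_nonneg L)
    have h16 : (m:ℚ) ≤ (L:ℚ) * ((1:ℚ)/b) := by
      rw [mul_one_div, le_div_iff₀ hbQ]
      have hcs' : ((b*m : ℕ):ℚ) ≤ (L:ℚ) := by exact_mod_cast hcs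
      push_cast at hcs'
      linarith
    linarith
  have h19 : ∀ xi, ∑ j, (c j:ℚ) * u j xi ≤ (m:ℚ) * (a xi : ℕ) := by
    intro xi
    have h20 : ((∑ j, c j * v j xi : ℕ):ℚ) ≤ ((m * a xi : ℕ):ℚ) := by exact_mod_cast hle xi
    push_cast at h20
    exact h20
  have hva : ∀ xi, v j₀ xi ≤ a xi := by
    intro xi
    have h17 : lam j₀ * u j₀ xi ≤ ∑ j, lam j * u j xi :=
      Finset.single_le_sum (fun j _ => mul_nonneg (hlam0 j) (hu0 j xi)) (Finset.mem_univ j₀)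
    have h18 : (m:ℚ) * u j₀ xi ≤ lam j₀ * u j₀ xi :=
      mul_le_mul_of_nonneg_right hlamj0 (hu0 j₀ xi)
    have hmQ : (0:ℚ) < m := by exact_mod_cast hm
    have h21 : (m:ℚ) * u j₀ xi ≤ (m:ℚ) * (a xi : ℕ) := by
      have := hsum_eq xi
      have := h19 xi
      linarith
    have h22 : u j₀ xi ≤ ((a xi : ℕ) : ℚ) := le_of_mul_le_mul_left h21 hmQ
    simp only [hu] at h22
    exact_mod_cast h22
  set lam' : Fin q → ℚ := fun j => lam j - if j = j₀ then (m:ℚ) else 0 with hlam'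
  have hlam'0 : ∀ j, 0 ≤ lam' j := by
    intro j
    have hrfl : lam' j = lam j - if j = j₀ then (m:ℚ) else 0 := rfl
    rw [hrfl]
    by_cases hjj : j = j₀
    · rw [if_pos hjj, hjj]
      linarith
    · rw [if_neg hjj, sub_zero]
      exact hlam0 j
  have hite : ∑ j, (if j = j₀ then (m:ℚ) else 0) = (m:ℚ) := by
    rw [Finset.sum_ite_eq']
    simp
  have hlam'sum : ∑ j, lam' j = (L:ℚ) - m := by
    simp only [hlam']
    rw [Finset.sum_sub_distrib, hlamsum, hite]
  have hlam'u : ∀ xi, (∑ j, lam' j * u j xi) + (m:ℚ) * u j₀ xi = ∑ j, (c j:ℚ) * u j xi := by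
    intro xi
    rw [← hsum_eq xi]
    have e0 : ∑ j, lam' j * u j xi
        = ∑ j, (lam j * u j xi - (if j = j₀ then (m:ℚ) else 0) * u j xi) := by
      refine Finset.sum_congr rfl fun j _ => by rw [hlam']; ring
    rw [e0, Finset.sum_sub_distrib]
    have h23 : ∑ j, (if j = j₀ then (m:ℚ) else 0) * u j xi = (m:ℚ) * u j₀ xi := by
      simp_rw [ite_mul, zero_mul]
      rw [Finset.sum_ite_eq']
      simp
    rw [h23]
    ring
  set D : ℕ := ∏ j, (lam' j).den with hD
  have hD0 : 0 < D := Finset.prod_pos fun j _ => (lam' j).pos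
  have hDQ : (0:ℚ) ≤ (D:ℚ) := Nat.cast_nonneg D
  choose c' hc' using fun j => rat_mul_den_nat (hlam'0 j)
    (Finset.dvd_prod_of_mem (fun j => (lam' j).den) (Finset.mem_univ j))
  refine ⟨j₀, hva, m * D, Nat.mul_pos hm hD0, c', ?_, ?_⟩
  · have hsum' : ∑ j, (c' j:ℚ) = ((L:ℚ) - m) * D := by
      rw [Finset.sum_congr rfl fun j _ => hc' j, ← Finset.sum_mul, hlam'sum]
    have h24 : ((b-1 : ℕ):ℚ) * ((m * D : ℕ):ℚ) ≤ ∑ j, (c' j : ℚ) := by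
      rw [hsum', Nat.cast_sub hb]
      push_cast
      have hcs' : ((b*m:ℕ):ℚ) ≤ (L:ℚ) := by exact_mod_cast hcs
      push_cast at hcs'
      have hLm : ((b:ℚ) - 1) * m ≤ (L:ℚ) - m := by nlinarith
      calc ((b:ℚ)-1) * ((m:ℚ) * D) = (((b:ℚ)-1)*(m:ℚ)) * D := by ring
        _ ≤ ((L:ℚ) - m) * D := mul_le_mul_of_nonneg_right hLm hDQ
    exact_mod_cast h24
  · intro xi
    have e1 : ∑ j, (c' j:ℚ) * u j xi = (D:ℚ) * ∑ j, lam' j * u j xi := by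
      rw [Finset.mul_sum]
      refine Finset.sum_congr rfl fun j _ => by rw [hc' j]; ring
    have h25 : (∑ j, (c' j:ℚ) * u j xi) + ((m:ℚ)*(D:ℚ)) * u j₀ xi
        ≤ ((m:ℚ)*(D:ℚ)) * (a xi : ℕ) := by
      rw [e1]
      calc (D:ℚ) * (∑ j, lam' j * u j xi) + ((m:ℚ)*(D:ℚ)) * u j₀ xi
          = (D:ℚ) * ((∑ j, lam' j * u j xi) + (m:ℚ) * u j₀ xi) := by ring
        _ = (D:ℚ) * (∑ j, (c j:ℚ) * u j xi) := by rw [hlam'u xi]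
        _ ≤ (D:ℚ) * ((m:ℚ) * (a xi : ℕ)) := mul_le_mul_of_nonneg_left (h19 xi) hDQ
        _ = ((m:ℚ)*(D:ℚ)) * (a xi : ℕ) := by ring
    simp only [hu] at h25
    exact_mod_cast h25


/-- If the exponent vectors `v 1, …, v q` lie in a hyperplane of `ℝ^d` not containing
the origin and `r₀` is the rank of the matrix with columns `v 1, …, v q`, then
`\overline{I^b} = I \overline{I^{b-1}}` for every `b ≥ r₀`. -/
theorem normalization_stabilizes_rank {k : Type*} [Field k] (d q : ℕ) (hq : 0 < q)
    (v : Fin q → (Fin d →₀ ℕ)) (w : Fin d → ℝ)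
    (hw : ∀ i, ∑ j, (v i j : ℝ) * w j = 1)
    (I : Ideal (MvPolynomial (Fin d) k))
    (hI : I = Ideal.span (Set.range fun i => monomial (v i) (1 : k)))
    (b : ℕ)
    (hb : (Matrix.of fun (i : Fin d) (j : Fin q) => (v j i : ℝ)).rank ≤ b) :
    intCl I b = I * intCl I (b - 1) := by
  classical
  set M : Matrix (Fin d) (Fin q) ℝ := Matrix.of fun i j => (v j i : ℝ) with hM
  have hb1 : 1 ≤ b := by
    refine le_trans ?_ hb
    have hcol : Mᵀ ⟨0, hq⟩ ≠ 0 := by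
      intro h0
      have h1 := hw ⟨0, hq⟩
      rw [Finset.sum_eq_zero (fun j _ => ?_)] at h1
      · exact zero_ne_one h1
      · have h2 := congrFun h0 j
        simp only [hM, Matrix.transpose_apply, Matrix.of_apply, Pi.zero_apply] at h2
        rw [h2, zero_mul]
    haveI : FiniteDimensional ℝ (Submodule.span ℝ (Set.range Mᵀ)) :=
      FiniteDimensional.span_of_finite ℝ (Set.finite_range _)
    have hpos : 0 < Module.finrank ℝ (Submodule.span ℝ (Set.range Mᵀ)) := by
      rw [Module.finrank_pos_iff_exists_ne_zero]
      refine ⟨⟨Mᵀ ⟨0, hq⟩, Submodule.subset_span (Set.mem_range_self _)⟩, ?_⟩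
      intro hzero
      exact hcol (congrArg Subtype.val hzero)
    calc 1 ≤ Module.finrank ℝ (Submodule.span ℝ (Set.range Mᵀ)) := hpos
      _ = M.rank := M.rank_eq_finrank_span_cols.symm
  have hIv : ∀ j : Fin q, monomial (v j) (1 : k) ∈ I := by
    intro j
    rw [hI]
    exact Ideal.subset_span (Set.mem_range_self j)
  apply le_antisymm
  · -- intCl I b ≤ I * intCl I (b - 1)
    rw [intCl, Ideal.span_le]
    rintro p ⟨a, rfl, m, hm, hmem⟩
    rw [hI, monomial_mem_pow_iff] at hmem
    obtain ⟨c, hcs, hcle⟩ := hmem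
    have hle' : ∀ i, ∑ j, c j * v j i ≤ m * a i := by
      intro i
      have h1 := hcle i
      rw [Finsupp.finset_sum_apply] at h1
      simp only [Finsupp.smul_apply, smul_eq_mul] at h1
      exact h1
    obtain ⟨j₀, hva, m', hm', c', hc's, hc'le⟩ :=
      key_lemma hb1 v w hw hb a m hm c hcs hle'
    have hva' : v j₀ ≤ a := Finsupp.le_def.mpr hva
    have hsplit : monomial a (1 : k) = monomial (v j₀) 1 * monomial (a - v j₀) 1 := by
      rw [monomial_mul, one_mul, add_tsub_cancel_of_le hva']
    rw [hsplit]
    refine Ideal.mul_mem_mul (hIv j₀) ?_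
    rw [intCl]
    apply Ideal.subset_span
    refine ⟨a - v j₀, rfl, m', hm', ?_⟩
    rw [hI, monomial_mem_pow_iff]
    refine ⟨c', hc's, ?_⟩
    rw [Finsupp.le_def]
    intro i
    rw [Finsupp.finset_sum_apply]
    simp only [Finsupp.smul_apply, smul_eq_mul, Finsupp.tsub_apply]
    have h2 := hc'le i
    have h3 := hva i
    have h5 : m' * (a i - v j₀ i) + m' * v j₀ i = m' * a i := by
      rw [← Nat.mul_add, Nat.sub_add_cancel h3]
    omega
  · -- I * intCl I (b - 1) ≤ intCl I b
    conv_lhs => rw [hI, intCl, Ideal.span_mul_span']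
    rw [Ideal.span_le]
    rintro p hp
    rw [Set.mem_mul] at hp
    obtain ⟨x, ⟨j, rfl⟩, y, ⟨a, rfl, m, hm, hmem⟩, rfl⟩ := hp
    rw [← hI] at hmem
    rw [intCl]
    apply Ideal.subset_span
    refine ⟨v j + a, by rw [monomial_mul, one_mul], m, hm, ?_⟩
    have hsplit : monomial (m • (v j + a)) (1 : k) =
        monomial (m • v j) 1 * monomial (m • a) 1 := by
      rw [monomial_mul, one_mul, smul_add]
    have h1 : monomial (m • v j) (1 : k) ∈ I ^ m := by
      have : ((monomial (v j) (1 : k)) ^ m) = monomial (m • v j) 1 := by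
        rw [monomial_pow, one_pow]
      rw [← this]
      exact Ideal.pow_mem_pow (hIv j) m
    have h2 : monomial (m • (v j + a)) (1 : k) ∈ I ^ (m + (b - 1) * m) := by
      rw [pow_add, hsplit]
      exact Ideal.mul_mem_mul h1 hmem
    have hbm : b * m = m + (b - 1) * m := by
      have hbb : b = 1 + (b - 1) := by omega
      rw [hbb, Nat.add_mul, one_mul, Nat.add_sub_cancel_left]
    rw [hbm]
    exact h2
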